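/- arXiv:2002.06310 — 5 statements merged into one kernel-verified Lean document; each statement's English description precedes it below -/
import Mathlib

section
/- Let x ∈ (0,1) be irrational and let p/q be a best 1-rational approximation of x (so p, q are odd, coprime, q > 0). Then there exists an integer n ≥ 0 such that p/q equals the n-th principal convergent p_n/q_n of the odd-odd continued fraction of x. -/
/-- The odd-odd continued fraction map on `[0,1]`.  For `x ∈ [(k-1)/k, k/(k+1))` with `k ≥ 1`
one has `k = ⌊1/(1-x)⌋`, and the two branches are separated by `(2k-1)/(2k+1)`. -/
noncomputable def oocfT (x : ℝ) : ℝ :=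
  if x = 1 then 1
  else if x < (2 * (⌊1 / (1 - x)⌋ : ℝ) - 1) / (2 * (⌊1 / (1 - x)⌋ : ℝ) + 1) then
    ((⌊1 / (1 - x)⌋ : ℝ) * x - ((⌊1 / (1 - x)⌋ : ℝ) - 1)) /
      ((⌊1 / (1 - x)⌋ : ℝ) - ((⌊1 / (1 - x)⌋ : ℝ) + 1) * x)
  else
    ((⌊1 / (1 - x)⌋ : ℝ) - ((⌊1 / (1 - x)⌋ : ℝ) + 1) * x) /
      ((⌊1 / (1 - x)⌋ : ℝ) * x - ((⌊1 / (1 - x)⌋ : ℝ) - 1))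

/-- OOCF partial quotient `a` of a point `y`: `a = k+1` if `y` is in the lower branch
interval `((k-1)/k, (2k-1)/(2k+1))`, and `a = k` if `y ∈ ((2k-1)/(2k+1), k/(k+1))`,
where `k = ⌊1/(1-y)⌋`. -/
noncomputable def oocfA (y : ℝ) : ℤ :=
  if y < (2 * (⌊1 / (1 - y)⌋ : ℝ) - 1) / (2 * (⌊1 / (1 - y)⌋ : ℝ) + 1) then ⌊1 / (1 - y)⌋ + 1
  else ⌊1 / (1 - y)⌋

/-- OOCF partial quotient `ε` of a point `y`: `ε = -1` on the lower branch interval and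
`ε = 1` on the upper one. -/
noncomputable def oocfE (y : ℝ) : ℤ :=
  if y < (2 * (⌊1 / (1 - y)⌋ : ℝ) - 1) / (2 * (⌊1 / (1 - y)⌋ : ℝ) + 1) then -1 else 1

/-- The OOCF convergents `(p'_n, q'_n, p_n, q_n)` of `x`, defined by
`p'_0 = 1, q'_0 = 0, p_0 = 1, q_0 = 1` and
`p'_n = a_n p_{n-1} - p'_{n-1}`, `q'_n = a_n q_{n-1} - q'_{n-1}`,
`p_n = 2 p'_n + ε_n p_{n-1}`, `q_n = 2 q'_n + ε_n q_{n-1}`,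
where `(a_n, ε_n)` are the partial quotients of `x`, i.e. `a_n = oocfA (oocfT^[n-1] x)`,
`ε_n = oocfE (oocfT^[n-1] x)`. -/
noncomputable def oocfConv (x : ℝ) : ℕ → ℤ × ℤ × ℤ × ℤ
  | 0 => (1, 0, 1, 1)
  | n + 1 =>
    let c := oocfConv x n
    (oocfA (oocfT^[n] x) * c.2.2.1 - c.1,
     oocfA (oocfT^[n] x) * c.2.2.2 - c.2.1,
     2 * (oocfA (oocfT^[n] x) * c.2.2.1 - c.1) + oocfE (oocfT^[n] x) * c.2.2.1,
     2 * (oocfA (oocfT^[n] x) * c.2.2.2 - c.2.1) + oocfE (oocfT^[n] x) * c.2.2.2)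

/-- `n`-th sub-convergent numerator `p'_n`. -/
noncomputable def oocfP' (x : ℝ) (n : ℕ) : ℤ := (oocfConv x n).1

/-- `n`-th sub-convergent denominator `q'_n`. -/
noncomputable def oocfQ' (x : ℝ) (n : ℕ) : ℤ := (oocfConv x n).2.1

/-- `n`-th principal convergent numerator `p_n`. -/
noncomputable def oocfP (x : ℝ) (n : ℕ) : ℤ := (oocfConv x n).2.2.1

/-- `n`-th principal convergent denominator `q_n`. -/
noncomputable def oocfQ (x : ℝ) (n : ℕ) : ℤ := (oocfConv x n).2.2.2

/-- `n`-th pseudo-convergent numerator: `p''_n = p'_n + ε_n p_{n-1}` for `n ≥ 1`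
(with the convention `p''_0 = 0`). -/
noncomputable def oocfP'' (x : ℝ) : ℕ → ℤ
  | 0 => 0
  | n + 1 => oocfP' x (n + 1) + oocfE (oocfT^[n] x) * oocfP x n

/-- `n`-th pseudo-convergent denominator: `q''_n = q'_n + ε_n q_{n-1}` for `n ≥ 1`
(with the convention `q''_0 = 1`). -/
noncomputable def oocfQ'' (x : ℝ) : ℕ → ℤ
  | 0 => 1
  | n + 1 => oocfQ' x (n + 1) + oocfE (oocfT^[n] x) * oocfQ x n

/-- `a/b` is a 1-rational: `b > 0`, `a`, `b` both odd and coprime. -/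
def IsOneRat (a b : ℤ) : Prop := 0 < b ∧ Odd a ∧ Odd b ∧ IsCoprime a b

/-- `p/q` is a best 1-rational approximation of `x`: it is a 1-rational and
`|qx - p| < |bx - a|` for every 1-rational `a/b ≠ p/q` with `0 < b ≤ q`. -/
def IsBestOneRatApprox (x : ℝ) (p q : ℤ) : Prop :=
  IsOneRat p q ∧
    ∀ a b : ℤ, IsOneRat a b → b ≤ q → (a : ℝ) / (b : ℝ) ≠ (p : ℝ) / (q : ℝ) →
      |(q : ℝ) * x - (p : ℝ)| < |(b : ℝ) * x - (a : ℝ)|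

private lemma irr_helper {y : ℝ} (h : Irrational y) (m k : ℤ) (hk : k ≠ 0) :
    (k : ℝ) * y ≠ (m : ℝ) := by
  intro he
  apply h
  refine ⟨(m : ℚ) / (k : ℚ), ?_⟩
  have hk' : (k : ℝ) ≠ 0 := Int.cast_ne_zero.2 hk
  push_cast
  field_simp
  linarith

private lemma not_irrational_of_eq {z : ℝ} (r : ℚ) (h : (r : ℝ) = z) : ¬ Irrational z :=
  fun hz => hz ⟨r, h⟩

lemma oocf_step (y : ℝ) (hy0 : 0 < y) (hy1 : y < 1) (hirr : Irrational y) :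
    0 < oocfT y ∧ oocfT y < 1 ∧ Irrational (oocfT y) ∧
    (oocfE y = 1 ∨ oocfE y = -1) ∧ 1 ≤ oocfA y ∧ (oocfE y = -1 → 2 ≤ oocfA y) ∧
    y * ((oocfA y : ℝ) * oocfT y + ((oocfA y : ℝ) + (oocfE y : ℝ))) =
      ((oocfA y : ℝ) - 1) * oocfT y + ((oocfA y : ℝ) - 1 + (oocfE y : ℝ)) ∧
    (oocfE y = 1 → (2 * (oocfA y : ℝ) + 1) * (1 - y) < 2) ∧
    (oocfE y = -1 → ((oocfA y : ℝ) - 1) * (1 - y) < 1) := by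
  have h1y : 0 < 1 - y := by linarith
  set k : ℤ := ⌊1 / (1 - y)⌋ with hk
  have hinv1 : 1 < 1 / (1 - y) := by
    rw [lt_div_iff₀ h1y]; linarith
  have hk1 : 1 ≤ k := by
    rw [hk]
    exact Int.le_floor.mpr (by push_cast; linarith)
  have hk0 : (0:ℝ) < (k:ℝ) := by exact_mod_cast hk1.trans_lt' (by norm_num)
  have hkle : (k : ℝ) ≤ 1 / (1 - y) := Int.floor_le _
  have hklt : 1 / (1 - y) < (k : ℝ) + 1 := Int.lt_floor_add_one _
  have hyk_lt : ((k:ℝ) + 1) * y < k := by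
    have := (div_lt_iff₀ h1y).1 hklt
    nlinarith
  have hyk_ge : (k:ℝ) - 1 ≤ (k:ℝ) * y := by
    have := (le_div_iff₀ h1y).1 hkle
    nlinarith
  have hyk_gt : (k:ℝ) - 1 < (k:ℝ) * y := by
    rcases hyk_ge.lt_or_eq with h | h
    · exact h
    · exact absurd h.symm (by exact_mod_cast irr_helper hirr (k - 1) k (by omega))
  have hθ : y ≠ (2 * (k:ℝ) - 1) / (2 * (k:ℝ) + 1) := by
    intro he
    have h2k : (0:ℝ) < 2 * (k:ℝ) + 1 := by linarith
    have : (2 * (k:ℝ) + 1) * y = 2 * (k:ℝ) - 1 := by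
      rw [he]; field_simp
    exact irr_helper hirr (2 * k - 1) (2 * k + 1) (by omega) (by push_cast; linarith [this])
  have hy_ne1 : y ≠ 1 := by linarith
  rcases hθ.lt_or_gt with hlt | hgt
  · -- lower branch : ε = -1, a = k + 1
    have hA : oocfA y = k + 1 := by rw [oocfA, ← hk, if_pos hlt]
    have hE : oocfE y = -1 := by rw [oocfE, ← hk, if_pos hlt]
    have hT : oocfT y = ((k:ℝ) * y - ((k:ℝ) - 1)) / ((k:ℝ) - ((k:ℝ) + 1) * y) := by
      rw [oocfT, if_neg hy_ne1, ← hk, if_pos hlt]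
    have hd : (0:ℝ) < (k:ℝ) - ((k:ℝ) + 1) * y := by linarith
    have hnum : (0:ℝ) < (k:ℝ) * y - ((k:ℝ) - 1) := by linarith
    have hy_lt : (2 * (k:ℝ) + 1) * y < 2 * (k:ℝ) - 1 := by
      have h2k : (0:ℝ) < 2 * (k:ℝ) + 1 := by linarith
      have := (lt_div_iff₀ h2k).1 hlt
      linarith
    set z := oocfT y with hz
    have hz0 : 0 < z := by rw [hT]; exact div_pos hnum hd
    have hz1 : z < 1 := by
      rw [hT, div_lt_one hd]; linarith
    have hzd : z * ((k:ℝ) - ((k:ℝ) + 1) * y) = (k:ℝ) * y - ((k:ℝ) - 1) := by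
      rw [hT]; exact div_mul_cancel₀ _ hd.ne'
    have hiden : y * (((k:ℝ) + 1) * z + (k:ℝ)) = (k:ℝ) * z + ((k:ℝ) - 1) := by
      linear_combination -hzd
    have hdz : (0:ℝ) < ((k:ℝ) + 1) * z + (k:ℝ) := by nlinarith
    have hirrz : Irrational z := by
      by_contra hcon
      rw [Irrational] at hcon
      push_neg at hcon
      obtain ⟨r, hr⟩ := hcon
      have hden : (((k:ℚ) + 1) * r + (k:ℚ)) ≠ 0 := by
        intro h0
        have : (((k:ℝ) + 1) * z + (k:ℝ)) = 0 := by
          rw [← hr]; exact_mod_cast congrArg (fun t : ℚ => (t : ℝ)) h0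
        linarith
      apply hirr
      refine ⟨((k:ℚ) * r + ((k:ℚ) - 1)) / (((k:ℚ) + 1) * r + (k:ℚ)), ?_⟩
      have hdenR : (((k:ℝ) + 1) * z + (k:ℝ)) ≠ 0 := ne_of_gt hdz
      push_cast
      rw [hr]
      field_simp
      linarith [hiden]
    refine ⟨hz0, hz1, hirrz, Or.inr hE, by omega, fun _ => by omega, ?_, ?_, ?_⟩
    · rw [hA, hE]; push_cast; linear_combination hiden
    · intro h1; rw [h1] at hE; exact absurd hE (by norm_num)
    · intro _; rw [hA]; push_cast; linarith
  · -- upper branch : ε = 1, a = k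
    have hnlt : ¬ y < (2 * (k:ℝ) - 1) / (2 * (k:ℝ) + 1) := not_lt.2 hgt.le
    have hA : oocfA y = k := by rw [oocfA, ← hk, if_neg hnlt]
    have hE : oocfE y = 1 := by rw [oocfE, ← hk, if_neg hnlt]
    have hT : oocfT y = ((k:ℝ) - ((k:ℝ) + 1) * y) / ((k:ℝ) * y - ((k:ℝ) - 1)) := by
      rw [oocfT, if_neg hy_ne1, ← hk, if_neg hnlt]
    have hd : (0:ℝ) < (k:ℝ) * y - ((k:ℝ) - 1) := by linarith
    have hnum : (0:ℝ) < (k:ℝ) - ((k:ℝ) + 1) * y := by linarith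
    have hy_gt : 2 * (k:ℝ) - 1 < (2 * (k:ℝ) + 1) * y := by
      have h2k : (0:ℝ) < 2 * (k:ℝ) + 1 := by linarith
      have := (div_lt_iff₀ h2k).1 hgt
      linarith
    set z := oocfT y with hz
    have hz0 : 0 < z := by rw [hT]; exact div_pos hnum hd
    have hz1 : z < 1 := by
      rw [hT, div_lt_one hd]; linarith
    have hzd : z * ((k:ℝ) * y - ((k:ℝ) - 1)) = (k:ℝ) - ((k:ℝ) + 1) * y := by
      rw [hT]; exact div_mul_cancel₀ _ hd.ne'
    have hiden : y * ((k:ℝ) * z + ((k:ℝ) + 1)) = ((k:ℝ) - 1) * z + (k:ℝ) := by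
      linear_combination hzd
    have hdz : (0:ℝ) < (k:ℝ) * z + ((k:ℝ) + 1) := by nlinarith
    have hirrz : Irrational z := by
      by_contra hcon
      rw [Irrational] at hcon
      push_neg at hcon
      obtain ⟨r, hr⟩ := hcon
      apply hirr
      refine ⟨(((k:ℚ) - 1) * r + (k:ℚ)) / ((k:ℚ) * r + ((k:ℚ) + 1)), ?_⟩
      have hdenR : ((k:ℝ) * z + ((k:ℝ) + 1)) ≠ 0 := ne_of_gt hdz
      have hden : ((k:ℚ) * r + ((k:ℚ) + 1)) ≠ 0 := by
        intro h0
        have : ((k:ℝ) * z + ((k:ℝ) + 1)) = 0 := by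
          rw [← hr]; exact_mod_cast congrArg (fun t : ℚ => (t : ℝ)) h0
        linarith
      push_cast
      rw [hr]
      field_simp
      linarith [hiden]
    refine ⟨hz0, hz1, hirrz, Or.inl hE, by omega, fun he => by rw [hE] at he; exact absurd he (by norm_num), ?_, ?_, ?_⟩
    · rw [hA, hE]; push_cast; linear_combination hiden
    · intro _; rw [hA]; push_cast; linarith
    · intro h1; rw [h1] at hE; exact absurd hE (by norm_num)

lemma oocfP'_succ (x : ℝ) (n : ℕ) :
    oocfP' x (n+1) = oocfA (oocfT^[n] x) * oocfP x n - oocfP' x n := rfl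

lemma oocfQ'_succ (x : ℝ) (n : ℕ) :
    oocfQ' x (n+1) = oocfA (oocfT^[n] x) * oocfQ x n - oocfQ' x n := rfl

lemma oocfP_succ (x : ℝ) (n : ℕ) :
    oocfP x (n+1) = 2 * (oocfA (oocfT^[n] x) * oocfP x n - oocfP' x n)
      + oocfE (oocfT^[n] x) * oocfP x n := rfl

lemma oocfQ_succ (x : ℝ) (n : ℕ) :
    oocfQ x (n+1) = 2 * (oocfA (oocfT^[n] x) * oocfQ x n - oocfQ' x n)
      + oocfE (oocfT^[n] x) * oocfQ x n := rfl

lemma oocfP'_zero (x : ℝ) : oocfP' x 0 = 1 := rfl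
lemma oocfQ'_zero (x : ℝ) : oocfQ' x 0 = 0 := rfl
lemma oocfP_zero (x : ℝ) : oocfP x 0 = 1 := rfl
lemma oocfQ_zero (x : ℝ) : oocfQ x 0 = 1 := rfl

lemma oocf_main (x : ℝ) (hx0 : 0 < x) (hx1 : x < 1) (hirr : Irrational x) : ∀ n : ℕ,
    0 < oocfT^[n] x ∧ oocfT^[n] x < 1 ∧ Irrational (oocfT^[n] x) ∧
    0 ≤ oocfQ' x n ∧ oocfQ' x n < oocfQ x n ∧
    Odd (oocfP x n) ∧ Odd (oocfQ x n) ∧ Odd (oocfP' x n + oocfQ' x n) ∧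
    (oocfP' x n * oocfQ x n - oocfP x n * oocfQ' x n = 1 ∨
     oocfP' x n * oocfQ x n - oocfP x n * oocfQ' x n = -1) ∧
    x * ((oocfQ' x n : ℝ) * oocfT^[n] x + ((oocfQ x n : ℝ) - (oocfQ' x n : ℝ)))
      = (oocfP' x n : ℝ) * oocfT^[n] x + ((oocfP x n : ℝ) - (oocfP' x n : ℝ)) := by
  intro n
  induction n with
  | zero =>
    simp only [Function.iterate_zero_apply, oocfP'_zero, oocfQ'_zero, oocfP_zero, oocfQ_zero]
    refine ⟨hx0, hx1, hirr, le_refl 0, by norm_num, odd_one, odd_one, odd_one, Or.inl (by ring), by push_cast; ring⟩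
  | succ n ih =>
    obtain ⟨h0, h1, hirrn, hq'0, hq'q, hpodd, hqodd, hp'q', hw, hiden⟩ := ih
    obtain ⟨hz0, hz1, hirrz, he, ha1, hae, hstep, hYe1, hYem1⟩ := oocf_step _ h0 h1 hirrn
    rw [← Function.iterate_succ_apply' oocfT n x] at hz0 hz1 hirrz hstep
    set a : ℤ := oocfA (oocfT^[n] x) with haa
    set e : ℤ := oocfE (oocfT^[n] x) with hee
    set p := oocfP x n
    set q := oocfQ x n
    set p' := oocfP' x n
    set q' := oocfQ' x n
    set z := oocfT^[n+1] x with hzz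
    set y := oocfT^[n] x with hyy
    have hP' : oocfP' x (n+1) = a * p - p' := oocfP'_succ x n
    have hQ' : oocfQ' x (n+1) = a * q - q' := oocfQ'_succ x n
    have hP : oocfP x (n+1) = 2 * (a * p - p') + e * p := oocfP_succ x n
    have hQ : oocfQ x (n+1) = 2 * (a * q - q') + e * q := oocfQ_succ x n
    have hqq : q ≤ a * q := le_mul_of_one_le_left (by omega) ha1
    have hq2 : e = -1 → 2 * q ≤ a * q := by
      intro h; exact mul_le_mul_of_nonneg_right (hae h) (by omega)
    refine ⟨hz0, hz1, hirrz, ?_, ?_, ?_, ?_, ?_, ?_, ?_⟩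
    · rw [hQ']; omega
    · rw [hQ', hQ]; rcases he with h | h <;> rw [h] <;> [omega; (have := hq2 h; omega)]
    · rw [hP]
      rcases he with h | h <;> rw [h] <;>
        [exact (even_two_mul _).add_odd (by simpa using hpodd);
         exact (even_two_mul _).add_odd (by simpa using hpodd.neg)]
    · rw [hQ]
      rcases he with h | h <;> rw [h] <;>
        [exact (even_two_mul _).add_odd (by simpa using hqodd);
         exact (even_two_mul _).add_odd (by simpa using hqodd.neg)]
    · rw [hP', hQ']
      have hpq : Even (a * (p + q)) := ((hpodd.add_odd hqodd).mul_left a)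
      obtain ⟨m, hm⟩ := hpq
      obtain ⟨j, hj⟩ := hp'q'
      have hlin : a * p + a * q = m + m := by rw [← hm]; ring
      rw [Int.odd_iff]
      omega
    · have hwstep : oocfP' x (n+1) * oocfQ x (n+1) - oocfP x (n+1) * oocfQ' x (n+1)
          = -e * (p' * q - p * q') := by rw [hP', hQ', hP, hQ]; ring
      rw [hwstep]
      rcases he with h | h <;> rcases hw with h2 | h2 <;> rw [h, h2] <;> norm_num
    · rw [hP', hQ', hP, hQ]
      push_cast
      linear_combination ((a:ℝ) * z + ((a:ℝ) + (e:ℝ))) * hiden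
        - (x * (q':ℝ) - (p':ℝ)) * hstep

lemma oocfQ_pos (x : ℝ) (hx0 : 0 < x) (hx1 : x < 1) (hirr : Irrational x) (n : ℕ) :
    0 < oocfQ x n := by
  obtain ⟨_, _, _, h4, h5, _⟩ := oocf_main x hx0 hx1 hirr n
  omega

lemma oocfQ_lt_succ (x : ℝ) (hx0 : 0 < x) (hx1 : x < 1) (hirr : Irrational x) (n : ℕ) :
    oocfQ x n < oocfQ x (n+1) := by
  obtain ⟨h0, h1, hirrn, hq'0, hq'q, _⟩ := oocf_main x hx0 hx1 hirr n
  obtain ⟨_, _, _, he, ha1, hae, _⟩ := oocf_step _ h0 h1 hirrn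
  have hQ := oocfQ_succ x n
  have hqq : oocfQ x n ≤ oocfA (oocfT^[n] x) * oocfQ x n :=
    le_mul_of_one_le_left (by omega) ha1
  rcases he with h | h
  · rw [h] at hQ; omega
  · have := mul_le_mul_of_nonneg_right (hae h) (le_of_lt (by omega : (0:ℤ) < oocfQ x n))
    rw [h] at hQ; omega

lemma oocf_best (x : ℝ) (hx0 : 0 < x) (hx1 : x < 1) (hirr : Irrational x) (n : ℕ)
    (a b : ℤ) (ha : Odd a) (hb : Odd b) (hb0 : 0 < b) (hblt : b < oocfQ x (n+1))
    (hne : ¬(a = oocfP x n ∧ b = oocfQ x n)) :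
    |(oocfQ x n : ℝ) * x - (oocfP x n : ℝ)| < |(b:ℝ) * x - (a:ℝ)| := by
  obtain ⟨h0, h1, hirrn, hq'0, hq'q, hpodd, hqodd, hp'q', hwor0, hiden⟩ :=
    oocf_main x hx0 hx1 hirr n
  obtain ⟨_, _, _, he, hA1, hAe, _, hYe1, hYem1⟩ := oocf_step _ h0 h1 hirrn
  set A : ℤ := oocfA (oocfT^[n] x) with hAA
  set E : ℤ := oocfE (oocfT^[n] x) with hEE
  set p := oocfP x n with hp
  set q := oocfQ x n with hq
  set p' := oocfP' x n with hp'
  set q' := oocfQ' x n with hq'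
  set y := oocfT^[n] x with hyy
  set w : ℤ := p' * q - p * q' with hww
  have hwor : w = 1 ∨ w = -1 := hwor0
  have hw1 : w * w = 1 := by rcases hwor with h | h <;> rw [h] <;> norm_num
  set σ : ℤ := w * (q * a - p * b) with hσσ
  set τ : ℤ := w * (p' * b - q' * a) with hττ
  have h1 : σ * p' + τ * p = a := by
    rw [hσσ, hττ]; linear_combination (a : ℤ) * hw1 + (-(a*w)) * hww
  have h2 : σ * q' + τ * q = b := by
    rw [hσσ, hττ]; linear_combination (b : ℤ) * hw1 + (-(b*w)) * hww
  -- parity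
  have hσeven : Even σ := by
    have : Even (q * a - p * b) := (hqodd.mul ha).sub_odd (hpodd.mul hb)
    exact this.mul_left w
  have hτodd : Odd τ := by
    have hwodd : Odd w := by rcases hwor with h | h <;> rw [h] <;> decide
    have h3 : p' * b - q' * a = (p' + q') * b - q' * (a + b) := by ring
    have : Odd (p' * b - q' * a) := by
      rw [h3]
      exact (hp'q'.mul hb).sub_even ((ha.add_odd hb).mul_left q')
    exact hwodd.mul this
  -- real identities
  set Y : ℝ := 1 - y with hYY
  have hY0 : 0 < Y := by rw [hYY]; linarith
  have hY1 : Y < 1 := by rw [hYY]; linarith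
  set D : ℝ := (q' : ℝ) * y + ((q : ℝ) - (q' : ℝ)) with hDD
  have hD : 0 < D := by
    rw [hDD]
    have : (0:ℝ) ≤ (q' : ℝ) := by exact_mod_cast hq'0
    have : ((q' : ℝ)) < (q:ℝ) := by exact_mod_cast hq'q
    nlinarith
  have hgD : ((q:ℝ) * x - p) * D = -(w:ℝ) * Y := by
    rw [hDD, hYY, hww]; push_cast
    linear_combination (q : ℝ) * hiden
  have hg'D : ((q':ℝ) * x - p') * D = -(w:ℝ) := by
    rw [hDD, hww]; push_cast
    linear_combination (q' : ℝ) * hiden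
  have har : (a:ℝ) = (σ:ℝ) * p' + (τ:ℝ) * p := by exact_mod_cast congrArg (Int.cast : ℤ → ℝ) h1.symm
  have hbr : (b:ℝ) = (σ:ℝ) * q' + (τ:ℝ) * q := by exact_mod_cast congrArg (Int.cast : ℤ → ℝ) h2.symm
  have hbD : ((b:ℝ) * x - a) * D = -(w:ℝ) * ((σ:ℝ) + (τ:ℝ) * Y) := by
    linear_combination (σ:ℝ) * hg'D + (τ:ℝ) * hgD + (x * D) * hbr - D * har
  have habsw : |(w:ℝ)| = 1 := by
    rcases hwor with h | h <;> rw [h] <;> norm_num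
  have e1 : |(q:ℝ) * x - p| = Y / D := by
    rw [eq_div_iff (ne_of_gt hD), ← abs_of_pos hD, ← abs_mul, hgD, abs_mul, abs_neg, habsw,
      one_mul, abs_of_pos hY0]
  have e2 : |(b:ℝ) * x - a| = |(σ:ℝ) + (τ:ℝ) * Y| / D := by
    rw [eq_div_iff (ne_of_gt hD), ← abs_of_pos hD, ← abs_mul, hbD, abs_mul, abs_neg, habsw,
      one_mul]
  have hQsucc : oocfQ x (n+1) = 2 * (A * q - q') + E * q := oocfQ_succ x n
  clear_value A E p q p' q' y w σ τ Y D
  rw [e1, e2, div_lt_div_iff_of_pos_right hD]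
  -- the key inequality : Y < |σ + τ Y|
  by_contra hcon
  push_neg at hcon
  have habs := abs_le.1 hcon
  -- rule out equalities
  have hirry := hirrn
  have hne1 : (σ:ℝ) + (τ:ℝ) * Y ≠ Y := by
    intro heq
    rcases eq_or_ne τ 1 with hτ | hτ
    · rw [hτ] at heq
      have hσ0 : σ = 0 := by
        have : (σ:ℝ) = 0 := by push_cast at heq ⊢; linarith
        exact_mod_cast this
      rw [hσ0, hτ] at h1 h2
      exact hne ⟨by linarith [h1], by linarith [h2]⟩
    · have : ((τ - 1 : ℤ):ℝ) * y = ((τ - 1 + σ : ℤ):ℝ) := by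
        rw [hYY] at heq; push_cast; push_cast at heq; linarith
      exact irr_helper hirry _ _ (by omega) this
  have hne2 : (σ:ℝ) + (τ:ℝ) * Y ≠ -Y := by
    intro heq
    rcases eq_or_ne τ (-1) with hτ | hτ
    · rw [hτ] at heq
      have hσ0 : σ = 0 := by
        have : (σ:ℝ) = 0 := by push_cast at heq ⊢; linarith
        exact_mod_cast this
      rw [hσ0, hτ] at h2
      have : b = -q := by linarith [h2]
      have hqpos : 0 < q := by omega
      omega
    · have : ((τ + 1 : ℤ):ℝ) * y = ((τ + 1 + σ : ℤ):ℝ) := by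
        rw [hYY] at heq; push_cast; push_cast at heq; linarith
      exact irr_helper hirry _ _ (by omega) this
  have hstrict1 : (σ:ℝ) + (τ:ℝ) * Y < Y := lt_of_le_of_ne habs.2 hne1
  have hstrict2 : -Y < (σ:ℝ) + (τ:ℝ) * Y := lt_of_le_of_ne habs.1 (Ne.symm hne2)
  have hτcases : τ = 1 ∨ τ = -1 ∨ 3 ≤ τ ∨ τ ≤ -3 := by
    obtain ⟨t, ht⟩ := hτodd; omega
  rcases hτcases with hτ | hτ | hτ | hτ
  · -- τ = 1 : σ ∈ (-2Y, 0), even : impossible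
    rw [hτ] at hstrict1 hstrict2
    push_cast at hstrict1 hstrict2
    have hs1 : (σ:ℝ) < 0 := by linarith
    have hs2 : (-2 : ℝ) < (σ:ℝ) := by linarith
    have : σ < 0 := by exact_mod_cast hs1
    have : (-2 : ℤ) < σ := by exact_mod_cast hs2
    obtain ⟨s, hs⟩ := hσeven; omega
  · -- τ = -1 : σ ∈ (0, 2Y), even : impossible
    rw [hτ] at hstrict1 hstrict2
    push_cast at hstrict1 hstrict2
    have hs1 : (0:ℝ) < (σ:ℝ) := by linarith
    have hs2 : (σ:ℝ) < 2 := by linarith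
    have : 0 < σ := by exact_mod_cast hs1
    have : σ < (2:ℤ) := by exact_mod_cast hs2
    obtain ⟨s, hs⟩ := hσeven; omega
  · -- τ ≥ 3
    have hτR : (3:ℝ) ≤ (τ:ℝ) := by exact_mod_cast hτ
    have hσneg : σ < 0 := by
      have : (σ:ℝ) < (1 - (τ:ℝ)) * Y := by linarith [hstrict1]
      have h' : (σ:ℝ) < 0 := lt_of_lt_of_le this (by nlinarith)
      exact_mod_cast h'
    have hσle : σ ≤ -2 := by obtain ⟨s, hs⟩ := hσeven; omega
    set s : ℤ := -σ with hss
    clear_value s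
    have hs2 : 2 ≤ s := by omega
    have hseven : Even s := by obtain ⟨t, ht⟩ := hσeven; exact ⟨-t, by omega⟩
    have hsY : (s:ℝ) < ((τ:ℝ) + 1) * Y := by
      have : (-Y) - (τ:ℝ) * Y < (σ:ℝ) := by linarith [hstrict2]
      push_cast [hss]; push_cast at this; linarith
    have hbeq : b = τ * q - s * q' := by rw [hss]; linarith [h2]
    rcases he with hE | hE
    · -- E = 1, q_{n+1} = (2A+1) q - 2 q'
      have hYb : (2*(A:ℝ)+1) * Y < 2 := hYe1 hE
      have hAR : (1:ℝ) ≤ (A:ℝ) := by exact_mod_cast hA1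
      have c1 : (0:ℝ) < 2*(A:ℝ)+1 := by linarith
      have c2 : (0:ℝ) < (τ:ℝ)+1 := by linarith
      have hreal : (s:ℝ) * (2*(A:ℝ)+1) < 2 * ((τ:ℝ) + 1) := by
        calc (s:ℝ) * (2*(A:ℝ)+1) < ((τ:ℝ)+1)*Y * (2*(A:ℝ)+1) :=
              mul_lt_mul_of_pos_right hsY c1
          _ = ((τ:ℝ)+1) * ((2*(A:ℝ)+1)*Y) := by ring
          _ < ((τ:ℝ)+1) * 2 := mul_lt_mul_of_pos_left hYb c2
          _ = 2*((τ:ℝ)+1) := by ring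
      have hint : s * (2*A+1) < 2 * (τ + 1) := by exact_mod_cast hreal
      have hev : Even (s * (2*A+1)) := hseven.mul_right _
      have hint2 : s * (2*A+1) ≤ 2 * τ := by obtain ⟨m, hm⟩ := hev; omega
      rw [hE] at hQsucc
      have hqpos : 0 < q := by omega
      have hAq : q ≤ A * q := le_mul_of_one_le_left (by omega) hA1
      have t1 : s * (2*A+1) * q ≤ 2 * τ * q :=
        mul_le_mul_of_nonneg_right hint2 (by omega)
      have t2 : 0 ≤ (s - 2) * ((2*A+1) * q - 2 * q') :=
        mul_nonneg (by omega) (by linarith [hAq, hq'q, hq'0])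
      linarith [t1, t2]
    · -- E = -1, A ≥ 2, q_{n+1} = (2A-1) q - 2 q'
      have hA2 := hAe hE
      have hYb : ((A:ℝ)-1) * Y < 1 := hYem1 hE
      have hAR : (2:ℝ) ≤ (A:ℝ) := by exact_mod_cast hA2
      have c1 : (0:ℝ) < (A:ℝ)-1 := by linarith
      have c2 : (0:ℝ) < (τ:ℝ)+1 := by linarith
      have hreal : (s:ℝ) * ((A:ℝ) - 1) < (τ:ℝ) + 1 := by
        calc (s:ℝ) * ((A:ℝ)-1) < ((τ:ℝ)+1)*Y * ((A:ℝ)-1) :=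
              mul_lt_mul_of_pos_right hsY c1
          _ = ((τ:ℝ)+1) * (((A:ℝ)-1)*Y) := by ring
          _ < ((τ:ℝ)+1) * 1 := mul_lt_mul_of_pos_left hYb c2
          _ = (τ:ℝ)+1 := by ring
      have hint : s * (A - 1) < τ + 1 := by exact_mod_cast hreal
      have hev : Even (s * (A-1)) := hseven.mul_right _
      have hint2 : s * (A-1) + 1 ≤ τ := by
        obtain ⟨m, hm⟩ := hev; obtain ⟨t, ht⟩ := hτodd; omega
      rw [hE] at hQsucc
      have hqpos : 0 < q := by omega
      have hAq : q ≤ A * q := le_mul_of_one_le_left (by omega) hA1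
      have t1 : (s * (A-1) + 1) * q ≤ τ * q :=
        mul_le_mul_of_nonneg_right hint2 (by omega)
      have hAq2 : 2 * q ≤ A * q := mul_le_mul_of_nonneg_right hA2 (by omega)
      have t2 : 0 ≤ (s - 2) * ((A-1) * q - q') :=
        mul_nonneg (by omega) (by linarith [hAq2, hq'q])
      linarith [t1, t2]
  · -- τ ≤ -3 : then b < 0
    have hτR : (τ:ℝ) ≤ -3 := by exact_mod_cast hτ
    have hσpos : 0 < σ := by
      have hlt : (-(τ:ℝ) - 1) * Y < (σ:ℝ) := by linarith [hstrict2]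
      have h0b : (0:ℝ) ≤ (-(τ:ℝ) - 1) * Y := mul_nonneg (by linarith) (le_of_lt hY0)
      have h' : (0:ℝ) < (σ:ℝ) := lt_of_le_of_lt h0b hlt
      exact_mod_cast h'
    have hσleZ : σ ≤ -τ := by
      have hlt : (σ:ℝ) < (1 - (τ:ℝ)) * Y := by linarith [hstrict1]
      have hYle : (1 - (τ:ℝ)) * Y ≤ (1 - (τ:ℝ)) * 1 :=
        mul_le_mul_of_nonneg_left (le_of_lt hY1) (by linarith)
      have h2' : (σ:ℝ) < 1 - (τ:ℝ) := by linarith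
      have h3' : σ < 1 - τ := by exact_mod_cast h2'
      omega
    have t3 : σ * q' ≤ (-τ) * q' := mul_le_mul_of_nonneg_right hσleZ hq'0
    have hqq1 : (1:ℤ) ≤ q - q' := by omega
    have hτ0 : τ ≤ 0 := by omega
    have t4 : τ * (q - q') ≤ τ * 1 := mul_le_mul_of_nonpos_left hqq1 hτ0
    linarith [t3, t4, h2]

lemma oocfQ_ge (x : ℝ) (hx0 : 0 < x) (hx1 : x < 1) (hirr : Irrational x) (n : ℕ) :
    (n : ℤ) + 1 ≤ oocfQ x n := by
  induction n with
  | zero => simp [oocfQ_zero]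
  | succ n ih =>
    have := oocfQ_lt_succ x hx0 hx1 hirr n
    push_cast
    omega

lemma oocf_coprime (x : ℝ) (hx0 : 0 < x) (hx1 : x < 1) (hirr : Irrational x) (n : ℕ) :
    IsCoprime (oocfP x n) (oocfQ x n) := by
  obtain ⟨_, _, _, _, _, _, _, _, hw, _⟩ := oocf_main x hx0 hx1 hirr n
  rcases hw with h | h
  · exact ⟨-oocfQ' x n, oocfP' x n, by linarith [h]⟩
  · exact ⟨oocfQ' x n, -oocfP' x n, by linarith [h]⟩

/-- Every best 1-rational approximation of an irrational `x ∈ (0,1)` is a principal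
convergent of the odd-odd continued fraction of `x`. -/
theorem isBestOneRatApprox_eq_oocf_principal_convergent
    (x : ℝ) (hx : x ∈ Set.Ioo (0 : ℝ) 1) (hirr : Irrational x)
    (p q : ℤ) (h : IsBestOneRatApprox x p q) :
    ∃ n : ℕ, (p : ℝ) / (q : ℝ) = (oocfP x n : ℝ) / (oocfQ x n : ℝ) := by
  obtain ⟨hx0, hx1⟩ := hx
  obtain ⟨⟨hq0, hpodd, hqodd, hcop⟩, hbest⟩ := h
  have hex : ∃ m : ℕ, q < oocfQ x m := by
    refine ⟨q.toNat, ?_⟩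
    have := oocfQ_ge x hx0 hx1 hirr q.toNat
    omega
  have hdec : DecidablePred fun m : ℕ => q < oocfQ x m := fun m => Int.decLt _ _
  set m := @Nat.find _ hdec hex with hm
  have hmspec : q < oocfQ x m := @Nat.find_spec _ hdec hex
  have hm0 : m ≠ 0 := by
    intro h0
    rw [h0, oocfQ_zero] at hmspec
    omega
  obtain ⟨n, hn⟩ : ∃ n, m = n + 1 := ⟨m - 1, by omega⟩
  have hqle : oocfQ x n ≤ q := by
    have := @Nat.find_min _ hdec hex n (by omega)
    omega
  by_cases hfrac : (p : ℝ) / (q : ℝ) = (oocfP x n : ℝ) / (oocfQ x n : ℝ)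
  · exact ⟨n, hfrac⟩
  · exfalso
    obtain ⟨_, _, _, hq'0, hq'q, hpnodd, hqnodd, _⟩ := oocf_main x hx0 hx1 hirr n
    have hqnpos : 0 < oocfQ x n := by omega
    have hb1 := hbest (oocfP x n) (oocfQ x n)
      ⟨hqnpos, hpnodd, hqnodd, oocf_coprime x hx0 hx1 hirr n⟩ hqle
      (fun hh => hfrac hh.symm)
    have hb2 : |(oocfQ x n : ℝ) * x - (oocfP x n : ℝ)| < |(q:ℝ) * x - (p:ℝ)| := by
      refine oocf_best x hx0 hx1 hirr n p q hpodd hqodd hq0 (by rw [← hn]; exact hmspec) ?_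
      rintro ⟨h1, h2⟩
      exact hfrac (by rw [h1, h2])
    linarith
end

section
/- Let x ∈ [0,1] and suppose there exist integers 0 ≤ i < j with T^i(x) = T^j(x) (i.e., the orbit of x under the odd-odd continued fraction map is eventually periodic). Then either x is rational, or there exist integers α, β, γ with α ≠ 0 such that α·x² + β·x + γ = 0 (i.e., x is a quadratic irrational). -/
/-- An irrational number cannot satisfy a nontrivial integer linear relation. -/
lemma oocf_lin_aux (x : ℝ) (hirr : Irrational x) (B C : ℤ)
    (h : (B : ℝ) * x + C = 0) : B = 0 ∧ C = 0 := by
  by_cases hB : B = 0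
  · refine ⟨hB, ?_⟩
    subst hB
    have : (C : ℝ) = 0 := by push_cast at h; linarith
    exact_mod_cast this
  · exfalso
    have hBx : (B : ℝ) ≠ 0 := Int.cast_ne_zero.mpr hB
    have : x = ((-C / B : ℚ) : ℝ) := by
      push_cast
      field_simp
      linarith
    exact hirr ⟨-C / B, this.symm⟩

/-- An integer Möbius transform with nonzero determinant preserves irrationality. -/
lemma oocf_moebius_irrational (p q r s : ℤ) (y : ℝ) (hirr : Irrational y)
    (hdet : p * s - q * r ≠ 0) (hden : (r : ℝ) * y + s ≠ 0) :
    Irrational (((p : ℝ) * y + q) / ((r : ℝ) * y + s)) := by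
  intro ⟨t, ht⟩
  have heq : (p : ℝ) * y + q = (t : ℝ) * ((r : ℝ) * y + s) := by
    rw [eq_div_iff hden] at ht
    linarith [ht]
  have hcase : ((p : ℝ) - t * r) * y = t * s - q := by nlinarith [heq]
  by_cases hc : ((p : ℝ) - t * r) = 0
  · rw [hc, zero_mul] at hcase
    have h1 : (p : ℝ) = t * r := by linarith [sub_eq_zero.mp hc]
    have h2 : (t : ℝ) * s = q := by linarith
    have : ((p * s - q * r : ℤ) : ℝ) = 0 := by push_cast; rw [h1, ← h2]; ring
    exact hdet (by exact_mod_cast this)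
  · have hy : y = ((t : ℝ) * s - q) / ((p : ℝ) - t * r) := by
      field_simp
      linarith
    exact hirr ⟨(t * s - q) / (p - t * r), by rw [hy]; push_cast; ring⟩

/-- One step of the odd-odd continued fraction map, in Möbius form. -/
lemma oocf_step_s2 (y : ℝ) (hy : y ∈ Set.Ioo (0 : ℝ) 1) (hirr : Irrational y) :
    ∃ p q r s : ℤ, (p * s - q * r = 1 ∨ p * s - q * r = -1) ∧
      0 < (r : ℝ) * y + s ∧ (r : ℝ) * y + s < 1 ∧
      oocfT y = ((p : ℝ) * y + q) / ((r : ℝ) * y + s) ∧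
      oocfT y ∈ Set.Ioo (0 : ℝ) 1 ∧ Irrational (oocfT y) := by
  obtain ⟨hy0, hy1⟩ := hy
  set k : ℤ := ⌊1 / (1 - y)⌋ with hk
  have h1y : (0 : ℝ) < 1 - y := by linarith
  have hinv : (1 : ℝ) < 1 / (1 - y) := by
    rw [lt_div_iff₀ h1y]; linarith
  have hirr1y : Irrational (1 - y) := by simpa using hirr.intCast_sub 1
  have hirrinv : Irrational (1 / (1 - y)) := by
    simpa [one_div] using hirr1y.inv
  have hk1 : 1 ≤ k := by
    have : ((1 : ℤ) : ℝ) ≤ 1 / (1 - y) := by push_cast; exact hinv.le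
    exact Int.le_floor.mpr this
  have hfl : (k : ℝ) < 1 / (1 - y) := by
    rcases lt_or_eq_of_le (Int.floor_le (1 / (1 - y))) with h | h
    · exact h
    · exact absurd ⟨(k : ℚ), by exact_mod_cast h⟩ hirrinv
  have hfu : 1 / (1 - y) < (k : ℝ) + 1 := Int.lt_floor_add_one _
  have hnum1 : (0 : ℝ) < (k : ℝ) * y - ((k : ℝ) - 1) := by
    have := (lt_div_iff₀ h1y).mp hfl
    nlinarith
  have hden1 : (0 : ℝ) < (k : ℝ) - ((k : ℝ) + 1) * y := by
    have := (div_lt_iff₀ h1y).mp hfu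
    nlinarith
  have hkR : (1 : ℝ) ≤ (k : ℝ) := by exact_mod_cast hk1
  have hy1' : y ≠ 1 := by intro h; rw [h] at hy1; exact lt_irrefl 1 hy1
  have h2k1 : (0 : ℝ) < 2 * (k : ℝ) + 1 := by linarith
  rw [oocfT, if_neg hy1', ← hk]
  by_cases hbr : y < (2 * (k : ℝ) - 1) / (2 * (k : ℝ) + 1)
  · rw [if_pos hbr]
    have hform : ((k : ℝ) * y - ((k : ℝ) - 1)) / ((k : ℝ) - ((k : ℝ) + 1) * y)
        = (((k : ℤ) : ℝ) * y + ((1 - k : ℤ) : ℝ)) / (((-(k + 1) : ℤ) : ℝ) * y + ((k : ℤ) : ℝ)) := by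
      push_cast; ring_nf
    have hdet : k * k - (1 - k) * (-(k + 1)) = 1 := by ring
    have hden' : ((-(k + 1) : ℤ) : ℝ) * y + ((k : ℤ) : ℝ) ≠ 0 := by
      push_cast; nlinarith [hden1]
    have hmem : ((k : ℝ) * y - ((k : ℝ) - 1)) / ((k : ℝ) - ((k : ℝ) + 1) * y) ∈ Set.Ioo (0 : ℝ) 1 := by
      constructor
      · exact div_pos hnum1 hden1
      · rw [div_lt_one hden1]
        rw [lt_div_iff₀ h2k1] at hbr
        nlinarith [hbr]
    refine ⟨k, 1 - k, -(k + 1), k, Or.inl hdet, ?_, ?_, ?_, hmem, ?_⟩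
    · push_cast; nlinarith [hden1]
    · push_cast; nlinarith [hnum1, hy0]
    · push_cast; ring_nf
    · rw [hform]
      exact oocf_moebius_irrational k (1 - k) (-(k + 1)) k y hirr (by rw [hdet]; exact one_ne_zero) hden'
  · rw [if_neg hbr]
    have hbr' : (2 * (k : ℝ) - 1) / (2 * (k : ℝ) + 1) < y := by
      rcases lt_or_eq_of_le (not_lt.mp hbr) with h | h
      · exact h
      · exact absurd ⟨((2 * (k : ℚ) - 1) / (2 * (k : ℚ) + 1)), by push_cast; exact h⟩ hirr
    have hform : ((k : ℝ) - ((k : ℝ) + 1) * y) / ((k : ℝ) * y - ((k : ℝ) - 1))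
        = (((-(k + 1) : ℤ) : ℝ) * y + ((k : ℤ) : ℝ)) / (((k : ℤ) : ℝ) * y + ((1 - k : ℤ) : ℝ)) := by
      push_cast; ring_nf
    have hdet : (-(k + 1)) * (1 - k) - k * k = -1 := by ring
    have hden' : ((k : ℤ) : ℝ) * y + ((1 - k : ℤ) : ℝ) ≠ 0 := by
      push_cast; nlinarith [hnum1]
    have hmem : ((k : ℝ) - ((k : ℝ) + 1) * y) / ((k : ℝ) * y - ((k : ℝ) - 1)) ∈ Set.Ioo (0 : ℝ) 1 := by
      constructor
      · exact div_pos hden1 hnum1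
      · rw [div_lt_one hnum1]
        rw [div_lt_iff₀ h2k1] at hbr'
        nlinarith [hbr']
    refine ⟨-(k + 1), k, k, 1 - k, Or.inr hdet, ?_, ?_, ?_, hmem, ?_⟩
    · push_cast; nlinarith [hnum1]
    · push_cast; nlinarith [hnum1, hkR, hy1]
    · push_cast; ring_nf
    · rw [hform]
      exact oocf_moebius_irrational (-(k + 1)) k k (1 - k) y hirr
        (by rw [hdet]; exact neg_ne_zero.mpr one_ne_zero) hden'

/-- Möbius form of the iterates of the odd-odd continued fraction map. -/
lemma oocf_iter (x : ℝ) (hx : x ∈ Set.Ioo (0 : ℝ) 1) (hirr : Irrational x) :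
    ∀ n : ℕ, ∃ a b c d : ℤ, (a * d - b * c = 1 ∨ a * d - b * c = -1) ∧
      0 < (c : ℝ) * x + d ∧ (c : ℝ) * x + d ≤ 1 ∧ (1 ≤ n → (c : ℝ) * x + d < 1) ∧
      oocfT^[n] x = ((a : ℝ) * x + b) / ((c : ℝ) * x + d) ∧
      oocfT^[n] x ∈ Set.Ioo (0 : ℝ) 1 ∧ Irrational (oocfT^[n] x) := by
  intro n
  induction n with
  | zero =>
    refine ⟨1, 0, 0, 1, Or.inl (by ring), by norm_num, by norm_num, by omega, ?_, by simpa using hx, by simpa using hirr⟩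
    simp
  | succ n ih =>
    obtain ⟨a, b, c, d, hdet, hpos, hle, _, hform, hmem, hirr'⟩ := ih
    obtain ⟨p, q, r, s, hdet2, hpos2, hlt2, hform2, hmem2, hirr2⟩ :=
      oocf_step_s2 (oocfT^[n] x) hmem hirr'
    set y : ℝ := oocfT^[n] x with hy
    have hd0 : (c : ℝ) * x + d ≠ 0 := ne_of_gt hpos
    have hd2 : (r : ℝ) * y + s ≠ 0 := ne_of_gt hpos2
    have hdeneq : ((r * a + s * c : ℤ) : ℝ) * x + ((r * b + s * d : ℤ) : ℝ)
        = ((c : ℝ) * x + d) * ((r : ℝ) * y + s) := by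
      rw [hform]
      push_cast
      field_simp
      ring
    refine ⟨p * a + q * c, p * b + q * d, r * a + s * c, r * b + s * d, ?_, ?_, ?_, ?_, ?_, ?_, ?_⟩
    · have : (p * a + q * c) * (r * b + s * d) - (p * b + q * d) * (r * a + s * c)
          = (p * s - q * r) * (a * d - b * c) := by ring
      rcases hdet with h1 | h1 <;> rcases hdet2 with h2 | h2 <;>
        [left; right; right; left] <;> rw [this, h1, h2] <;> ring
    · rw [hdeneq]; exact mul_pos hpos hpos2
    · rw [hdeneq]; nlinarith
    · intro _; rw [hdeneq]; nlinarith
    · have hpos2' : (0 : ℝ) < (r : ℝ) * (((a : ℝ) * x + b) / ((c : ℝ) * x + d)) + s := by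
        rw [← hform]; exact hpos2
      rw [Function.iterate_succ_apply', ← hy, hform2, hform]
      rw [hform] at hdeneq
      push_cast at hdeneq ⊢
      rw [div_eq_div_iff (ne_of_gt hpos2') (by rw [hdeneq]; exact ne_of_gt (mul_pos hpos hpos2'))]
      have hu : ((a : ℝ) * x + b) / ((c : ℝ) * x + d) * ((c : ℝ) * x + d) = (a : ℝ) * x + b :=
        div_mul_cancel₀ _ hd0
      linear_combination ((p : ℝ) * (((a : ℝ) * x + b) / ((c : ℝ) * x + d)) + q) * hdeneq +
        (p : ℝ) * ((r : ℝ) * (((a : ℝ) * x + b) / ((c : ℝ) * x + d)) + s) * hu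
    · rw [Function.iterate_succ_apply', ← hy]; exact hmem2
    · rw [Function.iterate_succ_apply', ← hy]; exact hirr2

/-- If the orbit of `x ∈ [0,1]` under the odd-odd continued fraction map is eventually
periodic, then `x` is rational or a quadratic irrational. -/
theorem oocf_eventually_periodic_imp_rat_or_quadratic
    (x : ℝ) (hx : x ∈ Set.Icc (0 : ℝ) 1) (i j : ℕ) (hij : i < j)
    (h : oocfT^[i] x = oocfT^[j] x) :
    (¬ Irrational x) ∨
      ∃ α β γ : ℤ, α ≠ 0 ∧ (α : ℝ) * x ^ 2 + (β : ℝ) * x + (γ : ℝ) = 0 := by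
  by_cases hirr : Irrational x
  · right
    have hx0 : x ≠ 0 := by simpa using hirr.ne_int 0
    have hx1 : x ≠ 1 := by simpa using hirr.ne_int 1
    have hx' : x ∈ Set.Ioo (0 : ℝ) 1 :=
      ⟨lt_of_le_of_ne hx.1 (Ne.symm hx0), lt_of_le_of_ne hx.2 hx1⟩
    obtain ⟨a, b, c, d, hdetM, hposM, _, _, hformM, hmemY, hirrY⟩ := oocf_iter x hx' hirr i
    set y : ℝ := oocfT^[i] x with hy
    set m : ℕ := j - i with hm
    have hm1 : 1 ≤ m := by omega
    have hper : oocfT^[m] y = y := by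
      rw [hy, ← Function.iterate_add_apply]
      have : m + i = j := by omega
      rw [this, ← h]
    obtain ⟨p, q, r, s, hdet2, hpos2, hle2, hlt2, hform2, -, -⟩ := oocf_iter y hmemY hirrY m
    have hlt : (r : ℝ) * y + s < 1 := hlt2 hm1
    rw [hper] at hform2
    -- quadratic relation for y :  r y² + (s-p) y - q = 0
    have hQy : (r : ℝ) * y ^ 2 + ((s : ℝ) - p) * y - q = 0 := by
      have := (eq_div_iff (ne_of_gt hpos2)).mp hform2
      nlinarith [this]
    have hr : r ≠ 0 := by
      intro hr0
      subst hr0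
      push_cast at hQy
      obtain ⟨hsp, hq0⟩ := oocf_lin_aux y hirrY (s - p) (-q) (by push_cast; linarith)
      simp only [Int.cast_zero, zero_mul, zero_add] at hpos2 hlt
      have : 0 < s := by exact_mod_cast hpos2
      have : s < 1 := by exact_mod_cast hlt
      omega
    -- pull back along  y = (a x + b)/(c x + d)
    have hd0 : (c : ℝ) * x + d ≠ 0 := ne_of_gt hposM
    have hE : y * ((c : ℝ) * x + d) = (a : ℝ) * x + b := by
      rw [hformM]; exact div_mul_cancel₀ _ hd0
    set A : ℤ := r * a * a + (s - p) * a * c - q * c * c with hA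
    set B : ℤ := 2 * r * a * b + (s - p) * (a * d + b * c) - 2 * q * c * d with hB
    set C : ℤ := r * b * b + (s - p) * b * d - q * d * d with hC
    have hABC : (A : ℝ) * x ^ 2 + (B : ℝ) * x + (C : ℝ) = 0 := by
      rw [hA, hB, hC]
      push_cast
      linear_combination ((c : ℝ) * x + d) ^ 2 * hQy -
        ((r : ℝ) * ((a : ℝ) * x + b + y * ((c : ℝ) * x + d)) + ((s : ℝ) - p) * ((c : ℝ) * x + d)) * hE
    by_cases hA0 : A = 0
    · exfalso
      rw [hA0] at hABC
      push_cast at hABC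
      obtain ⟨hB0, hC0⟩ := oocf_lin_aux x hirr B C (by linarith)
      have hkey : d * d * A - c * d * B + c * c * C = (a * d - b * c) ^ 2 * r := by
        rw [hA, hB, hC]; ring
      rw [hA0, hB0, hC0] at hkey
      rcases hdetM with hΔ | hΔ <;> rw [hΔ] at hkey <;> simp at hkey <;> exact hr hkey.symm
    · exact ⟨A, B, C, hA0, hABC⟩
  · exact Or.inl hirr
end

section
/- For every irrational x ∈ (0,1) and every integer n ≥ 1, the principal convergents of the odd-odd continued fraction of x satisfy p_{n−1}·q_n − p_n·q_{n−1} = (−1)^{n+1} · 2 · ε_1·ε_2···ε_{n−1} (where the empty product for n = 1 equals 1). In particular |p_{n−1}·q_n − p_n·q_{n−1}| = 2 for all n ≥ 1. -/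
lemma oocfE_cases (y : ℝ) : oocfE y = -1 ∨ oocfE y = 1 := by
  unfold oocfE; split <;> simp

lemma oocf_det_aux (x : ℝ) (n : ℕ) :
    oocfP' x n * oocfQ x n - oocfP x n * oocfQ' x n =
      (-1) ^ n * ∏ i ∈ Finset.range n, oocfE (oocfT^[i] x) := by
  induction n with
  | zero => simp [oocfP', oocfQ, oocfP, oocfQ', oocfConv]
  | succ m ih =>
    rw [Finset.prod_range_succ]
    simp only [oocfP', oocfQ, oocfP, oocfQ', oocfConv] at ih ⊢
    set a := oocfA (oocfT^[m] x)
    set e := oocfE (oocfT^[m] x)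
    push_cast
    ring_nf
    ring_nf at ih
    linear_combination (-e : ℤ) * ih

/-- For every `n ≥ 1`,
`p_{n-1} q_n - p_n q_{n-1} = (-1)^(n+1) · 2 · ε_1 ⋯ ε_{n-1}`; in particular the
absolute value of the left-hand side is `2`. -/
theorem oocf_principal_convergents_det
    (x : ℝ) (hx : x ∈ Set.Ioo (0 : ℝ) 1) (hirr : Irrational x)
    (n : ℕ) (hn : 1 ≤ n) :
    oocfP x (n - 1) * oocfQ x n - oocfP x n * oocfQ x (n - 1) =
        (-1) ^ (n + 1) * 2 * ∏ i ∈ Finset.range (n - 1), oocfE (oocfT^[i] x) ∧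
      |oocfP x (n - 1) * oocfQ x n - oocfP x n * oocfQ x (n - 1)| = 2 := by
  obtain ⟨m, rfl⟩ : ∃ m, n = m + 1 := ⟨n - 1, (Nat.succ_pred_eq_of_pos hn).symm⟩
  simp only [Nat.add_sub_cancel]
  have key : oocfP x m * oocfQ x (m + 1) - oocfP x (m + 1) * oocfQ x m =
      (-1) ^ (m + 1 + 1) * 2 * ∏ i ∈ Finset.range m, oocfE (oocfT^[i] x) := by
    have h := oocf_det_aux x m
    simp only [oocfP', oocfQ, oocfP, oocfQ', oocfConv] at h ⊢
    set a := oocfA (oocfT^[m] x)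
    set e := oocfE (oocfT^[m] x)
    linear_combination (2 : ℤ) * h
  refine ⟨key, ?_⟩
  rw [key, abs_mul, abs_mul, Finset.abs_prod]
  have : ∀ i ∈ Finset.range m, |oocfE (oocfT^[i] x)| = 1 := by
    intro i _
    rcases oocfE_cases (oocfT^[i] x) with h | h <;> simp [h]
  rw [Finset.prod_congr rfl this]
  simp
end

section
/- For every irrational x ∈ (0,1) and every integer n ≥ 1, the following hold for the OOCF convergents of x (setting p''_0 = 0, q''_0 = 1): (i) p_n/q_n lies strictly between p'_n/q'_n and p''_n/q''_n; (ii) p_{n−1}/q_{n−1} does not lie between p'_n/q'_n and p''_n/q''_n; (iii) the three pairwise distinct rationals p_n/q_n, p'_n/q'_n, p''_n/q''_n all lie in the half-open interval whose endpoints are p_{n−1}/q_{n−1} and p''_{n−1}/q''_{n−1}, containing p''_{n−1}/q''_{n−1} and not containing p_{n−1}/q_{n−1}. -/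
/-- `c` lies strictly between `a` and `b`. -/
def StrictlyBetween (c a b : ℝ) : Prop := (a < c ∧ c < b) ∨ (b < c ∧ c < a)

/-- `c` lies (weakly) between `a` and `b`. -/
def Between (c a b : ℝ) : Prop := (a ≤ c ∧ c ≤ b) ∨ (b ≤ c ∧ c ≤ a)

/-- `y` lies in the half-open interval with endpoints `c` and `d`, containing `d` but
not `c`. -/
def InHalfOpen (y c d : ℝ) : Prop := (c < y ∧ y ≤ d) ∨ (d ≤ y ∧ y < c)

lemma oocf_k_pos {y : ℝ} (hy : y ∈ Set.Ioo (0:ℝ) 1) : 1 ≤ ⌊1/(1-y)⌋ := by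
  have h1 : (0:ℝ) < 1 - y := by linarith [hy.2]
  have h2 : (1:ℝ) ≤ 1/(1-y) := by
    rw [le_div_iff₀ h1]; linarith [hy.1]
  exact Int.le_floor.mpr (by exact_mod_cast h2)

lemma oocf_num_pos {y : ℝ} (hy : y ∈ Set.Ioo (0:ℝ) 1) (hirr : Irrational y) :
    0 < (⌊1/(1-y)⌋:ℝ) * y - ((⌊1/(1-y)⌋:ℝ) - 1) ∧
    0 < (⌊1/(1-y)⌋:ℝ) - ((⌊1/(1-y)⌋:ℝ) + 1) * y := by
  set k : ℤ := ⌊1/(1-y)⌋ with hk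
  have hk1 : 1 ≤ k := oocf_k_pos hy
  have h1 : (0:ℝ) < 1 - y := by linarith [hy.2]
  have hfl : (k:ℝ) ≤ 1/(1-y) := Int.floor_le _
  have hfu : 1/(1-y) < (k:ℝ) + 1 := Int.lt_floor_add_one _
  have hkR : (1:ℝ) ≤ (k:ℝ) := by exact_mod_cast hk1
  constructor
  · have hle : (k:ℝ) * (1-y) ≤ 1 := by
      calc (k:ℝ) * (1-y) ≤ (1/(1-y)) * (1-y) := by nlinarith
      _ = 1 := by field_simp
    rcases lt_or_eq_of_le hle with h | h
    · nlinarith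
    · exfalso
      have hkne : (k:ℝ) ≠ 0 := by positivity
      have : y = (((k - 1 : ℤ) : ℚ) / ((k:ℤ) : ℚ) : ℚ) := by
        push_cast
        rw [eq_div_iff hkne]
        nlinarith
      exact hirr ⟨_, this.symm⟩
  · have h2 : 1 < ((k:ℝ)+1) * (1-y) := by
      calc (1:ℝ) = (1/(1-y)) * (1-y) := by field_simp
      _ < ((k:ℝ)+1) * (1-y) := by nlinarith
    nlinarith

lemma oocf_mid_lt {y : ℝ} (hy : y ∈ Set.Ioo (0:ℝ) 1) (hirr : Irrational y)
    (h : ¬ y < (2 * (⌊1/(1-y)⌋:ℝ) - 1) / (2 * (⌊1/(1-y)⌋:ℝ) + 1)) :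
    (2 * (⌊1/(1-y)⌋:ℝ) - 1) / (2 * (⌊1/(1-y)⌋:ℝ) + 1) < y := by
  rcases lt_or_eq_of_le (not_lt.mp h) with h' | h'
  · exact h'
  · exfalso
    set k : ℤ := ⌊1/(1-y)⌋ with hk
    have hk1 : 1 ≤ k := oocf_k_pos hy
    have hne : (2*(k:ℝ)+1) ≠ 0 := by
      have : (1:ℝ) ≤ (k:ℝ) := by exact_mod_cast hk1
      positivity
    refine hirr ⟨((2*(k:ℤ)-1 : ℤ) : ℚ) / ((2*(k:ℤ)+1 : ℤ) : ℚ), ?_⟩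
    rw [← h']
    push_cast
    ring

lemma oocf_step_s15 {y : ℝ} (hy : y ∈ Set.Ioo (0:ℝ) 1) (hirr : Irrational y) :
    oocfT y ∈ Set.Ioo (0:ℝ) 1 ∧ Irrational (oocfT y) := by
  set k : ℤ := ⌊1/(1-y)⌋ with hk
  have hk1 : 1 ≤ k := oocf_k_pos hy
  have hkR : (1:ℝ) ≤ (k:ℝ) := by exact_mod_cast hk1
  obtain ⟨hnum, hden⟩ := oocf_num_pos hy hirr
  have hy1 : y ≠ 1 := ne_of_lt hy.2
  have hmid0 : ((2*(k:ℝ)-1)/(2*(k:ℝ)+1)) = (2 * (⌊1/(1-y)⌋:ℝ) - 1) / (2 * (⌊1/(1-y)⌋:ℝ) + 1) := by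
    rw [← hk]
  rw [oocfT, if_neg hy1]
  by_cases hb : y < (2 * (⌊1/(1-y)⌋:ℝ) - 1) / (2 * (⌊1/(1-y)⌋:ℝ) + 1)
  · rw [if_pos hb]
    rw [← hk] at hnum hden hb ⊢
    have hmlt : y * (2*(k:ℝ)+1) < 2*(k:ℝ)-1 := by
      rw [← lt_div_iff₀ (by positivity : (0:ℝ) < 2*(k:ℝ)+1)]
      exact hb
    have hTval : ((k:ℝ)*y - ((k:ℝ)-1)) / ((k:ℝ) - ((k:ℝ)+1)*y) < 1 := by
      rw [div_lt_one hden]; nlinarith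
    refine ⟨⟨div_pos hnum hden, hTval⟩, ?_⟩
    -- irrationality
    intro ⟨r, hr⟩
    have hrpos : (0:ℝ) < r := by rw [hr]; exact div_pos hnum hden
    have hrQ : (0:ℚ) < r := by exact_mod_cast hrpos
    have hdq : ((k:ℚ)+1)*r + k ≠ 0 := by positivity
    have hdr : ((k:ℝ)+1)*(r:ℝ) + k ≠ 0 := by
      have : (0:ℚ) < ((k:ℚ)+1)*r + k := by positivity
      have := (Rat.cast_pos (K := ℝ)).mpr this
      push_cast at this ⊢; linarith
    refine hirr ⟨((k:ℚ)*r + ((k:ℚ)-1)) / (((k:ℚ)+1)*r + k), ?_⟩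
    have heq : (r:ℝ) * ((k:ℝ) - ((k:ℝ)+1)*y) = (k:ℝ)*y - ((k:ℝ)-1) := by
      rw [hr]; field_simp; exact div_self (ne_of_gt (by linarith))
    push_cast
    rw [div_eq_iff hdr]
    nlinarith [heq]
  · rw [if_neg hb]
    have hb' := oocf_mid_lt hy hirr hb
    rw [← hk] at hnum hden hb' ⊢
    have hmlt : 2*(k:ℝ)-1 < y * (2*(k:ℝ)+1) := by
      rw [← div_lt_iff₀ (by positivity : (0:ℝ) < 2*(k:ℝ)+1)]
      exact hb'
    have hTval : ((k:ℝ) - ((k:ℝ)+1)*y) / ((k:ℝ)*y - ((k:ℝ)-1)) < 1 := by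
      rw [div_lt_one hnum]; nlinarith
    refine ⟨⟨div_pos hden hnum, hTval⟩, ?_⟩
    intro ⟨r, hr⟩
    have hrpos : (0:ℝ) < r := by rw [hr]; exact div_pos hden hnum
    have hrQ : (0:ℚ) < r := by exact_mod_cast hrpos
    have hdq : (k:ℚ)*r + (k:ℚ)+1 ≠ 0 := by positivity
    have hdr : (k:ℝ)*(r:ℝ) + (k:ℝ)+1 ≠ 0 := by
      have : (0:ℚ) < (k:ℚ)*r + (k:ℚ)+1 := by positivity
      have := (Rat.cast_pos (K := ℝ)).mpr this
      push_cast at this ⊢; linarith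
    refine hirr ⟨(((k:ℚ)-1)*r + (k:ℚ)) / ((k:ℚ)*r + (k:ℚ)+1), ?_⟩
    have heq : (r:ℝ) * ((k:ℝ)*y - ((k:ℝ)-1)) = (k:ℝ) - ((k:ℝ)+1)*y := by
      rw [hr]; field_simp
    push_cast
    rw [div_eq_iff hdr]
    nlinarith [heq]

lemma oocf_AE {y : ℝ} (hy : y ∈ Set.Ioo (0:ℝ) 1) :
    1 ≤ oocfA y ∧ (oocfE y = 1 ∨ oocfE y = -1) ∧ (oocfE y = -1 → 2 ≤ oocfA y) := by
  have hk1 : 1 ≤ ⌊1/(1-y)⌋ := oocf_k_pos hy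
  rw [oocfA, oocfE]
  split
  · exact ⟨by omega, Or.inr rfl, fun _ => by omega⟩
  · exact ⟨hk1, Or.inl rfl, by simp⟩

lemma oocf_iter_s15 {x : ℝ} (hx : x ∈ Set.Ioo (0:ℝ) 1) (hirr : Irrational x) (n : ℕ) :
    oocfT^[n] x ∈ Set.Ioo (0:ℝ) 1 ∧ Irrational (oocfT^[n] x) := by
  induction n with
  | zero => exact ⟨hx, hirr⟩
  | succ n ih =>
    rw [Function.iterate_succ_apply']
    exact oocf_step_s15 ih.1 ih.2

lemma oocf_pp'' (x : ℝ) (n : ℕ) : oocfP'' x n = oocfP x n - oocfP' x n := by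
  cases n with
  | zero => simp [oocfP'', oocfP, oocfP', oocfConv]
  | succ n =>
    simp only [oocfP'', oocfP, oocfP', oocfQ', oocfConv]
    ring

lemma oocf_qq'' (x : ℝ) (n : ℕ) : oocfQ'' x n = oocfQ x n - oocfQ' x n := by
  cases n with
  | zero => simp [oocfQ'', oocfQ, oocfQ', oocfConv]
  | succ n =>
    simp only [oocfQ'', oocfQ, oocfQ', oocfP', oocfConv]
    ring

lemma oocf_rec (x : ℝ) (n : ℕ) :
    oocfP' x (n+1) = oocfA (oocfT^[n] x) * oocfP x n - oocfP' x n ∧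
    oocfQ' x (n+1) = oocfA (oocfT^[n] x) * oocfQ x n - oocfQ' x n ∧
    oocfP x (n+1) = 2 * oocfP' x (n+1) + oocfE (oocfT^[n] x) * oocfP x n ∧
    oocfQ x (n+1) = 2 * oocfQ' x (n+1) + oocfE (oocfT^[n] x) * oocfQ x n := by
  refine ⟨rfl, rfl, ?_, ?_⟩ <;> simp only [oocfP, oocfP', oocfQ, oocfQ', oocfConv]

lemma oocf_inv {x : ℝ} (hx : x ∈ Set.Ioo (0:ℝ) 1) (hirr : Irrational x) (n : ℕ) :
    0 ≤ oocfQ' x n ∧ oocfQ' x n < oocfQ x n ∧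
    (oocfP' x n * oocfQ x n - oocfP x n * oocfQ' x n = 1 ∨
     oocfP' x n * oocfQ x n - oocfP x n * oocfQ' x n = -1) := by
  induction n with
  | zero =>
    refine ⟨le_refl _, ?_, Or.inl ?_⟩ <;> simp [oocfQ', oocfQ, oocfP', oocfP, oocfConv]
  | succ n ih =>
    obtain ⟨hq', hqq, hdet⟩ := ih
    obtain ⟨hyI, hyIrr⟩ := oocf_iter_s15 hx hirr n
    obtain ⟨ha, he, hae⟩ := oocf_AE hyI
    obtain ⟨h1, h2, h3, h4⟩ := oocf_rec x n
    set a := oocfA (oocfT^[n] x)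
    set e := oocfE (oocfT^[n] x)
    set p' := oocfP' x n; set q' := oocfQ' x n; set p := oocfP x n; set q := oocfQ x n
    have hq1 : 1 ≤ q := by omega
    constructor
    · rw [h2]; nlinarith
    constructor
    · rw [h4, h2]
      rcases he with he1 | he1
      · rw [he1]; nlinarith
      · have ha2 := hae he1; rw [he1]; nlinarith
    · rw [h3, h4, h1, h2]
      rcases he with he1 | he1 <;> rw [he1] <;> rcases hdet with hd | hd
      · right; linear_combination -hd
      · left; linear_combination -hd
      · left; linear_combination hd
      · right; linear_combination hd

lemma frac_lt {X Y Z W : ℤ} (hY : 0 < Y) (hW : 0 < W) (h : X * W < Z * Y) :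
    (X:ℝ)/(Y:ℝ) < (Z:ℝ)/(W:ℝ) := by
  rw [div_lt_div_iff₀ (by exact_mod_cast hY) (by exact_mod_cast hW)]
  exact_mod_cast h

lemma frac_le {X Y Z W : ℤ} (hY : 0 < Y) (hW : 0 < W) (h : X * W ≤ Z * Y) :
    (X:ℝ)/(Y:ℝ) ≤ (Z:ℝ)/(W:ℝ) := by
  rw [div_le_div_iff₀ (by exact_mod_cast hY) (by exact_mod_cast hW)]
  exact_mod_cast h

lemma frac_ne {X Y Z W d : ℤ} (hY : 0 < Y) (hW : 0 < W)
    (hd : X * W - Z * Y = d) (hd0 : d ≠ 0) : (X:ℝ)/(Y:ℝ) ≠ (Z:ℝ)/(W:ℝ) := by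
  intro hc
  rw [div_eq_div_iff (by exact_mod_cast hY.ne' : (Y:ℝ) ≠ 0)
    (by exact_mod_cast hW.ne' : (W:ℝ) ≠ 0)] at hc
  have h2 : X * W = Z * Y := by exact_mod_cast hc
  exact hd0 (by linarith)

lemma oocf_key (p' q' p q a e f P' Q' P Q : ℤ)
    (hq' : 0 ≤ q') (hqq : q' < q) (hf : f = 1 ∨ f = -1)
    (hdet : p' * q - p * q' = f) (ha : 1 ≤ a)
    (he : e = 1 ∨ e = -1) (hae : e = -1 → 2 ≤ a)
    (hP' : P' = a * p - p') (hQ' : Q' = a * q - q')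
    (hP : P = 2 * P' + e * p) (hQ : Q = 2 * Q' + e * q) :
    StrictlyBetween ((P:ℝ)/(Q:ℝ)) ((P':ℝ)/(Q':ℝ)) (((P - P' : ℤ):ℝ)/((Q - Q' : ℤ):ℝ)) ∧
    ¬ Between ((p:ℝ)/(q:ℝ)) ((P':ℝ)/(Q':ℝ)) (((P - P' : ℤ):ℝ)/((Q - Q' : ℤ):ℝ)) ∧
    ((P:ℝ)/(Q:ℝ) ≠ (P':ℝ)/(Q':ℝ) ∧
      (P:ℝ)/(Q:ℝ) ≠ ((P - P' : ℤ):ℝ)/((Q - Q' : ℤ):ℝ) ∧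
      (P':ℝ)/(Q':ℝ) ≠ ((P - P' : ℤ):ℝ)/((Q - Q' : ℤ):ℝ)) ∧
    InHalfOpen ((P:ℝ)/(Q:ℝ)) ((p:ℝ)/(q:ℝ)) (((p - p' : ℤ):ℝ)/((q - q' : ℤ):ℝ)) ∧
    InHalfOpen ((P':ℝ)/(Q':ℝ)) ((p:ℝ)/(q:ℝ)) (((p - p' : ℤ):ℝ)/((q - q' : ℤ):ℝ)) ∧
    InHalfOpen (((P - P' : ℤ):ℝ)/((Q - Q' : ℤ):ℝ)) ((p:ℝ)/(q:ℝ))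
      (((p - p' : ℤ):ℝ)/((q - q' : ℤ):ℝ)) := by
  -- positivity of denominators
  have hq0 : 0 < q := lt_of_le_of_lt hq' hqq
  have hqq'0 : 0 < q - q' := by omega
  have hQ'0 : 0 < Q' := by subst hQ'; nlinarith
  have hQ''0 : 0 < Q - Q' := by
    subst hQ' hQ
    rcases he with rfl | rfl
    · nlinarith
    · have := hae rfl; nlinarith
  have hQ0 : 0 < Q := by omega
  -- sign facts
  have hef : e * f = 1 ∨ e * f = -1 := by
    rcases he with rfl | rfl <;> rcases hf with rfl | rfl <;> norm_num
  have hef0 : e * f ≠ 0 := by rcases hef with h | h <;> omega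
  have hc7 : 0 ≤ a + e - 1 := by
    rcases he with rfl | rfl
    · omega
    · have := hae rfl; omega
  have hc8 : 1 ≤ 2*a + e - 2 := by
    rcases he with rfl | rfl
    · omega
    · have := hae rfl; omega
  -- determinant identities
  have I1 : P * Q' - P' * Q = e * f := by
    subst hP' hQ' hP hQ; linear_combination e * hdet
  have I2 : (P - P') * Q - P * (Q - Q') = e * f := by
    subst hP' hQ' hP hQ; linear_combination e * hdet
  have I9 : P' * (Q - Q') - (P - P') * Q' = -(e * f) := by
    subst hP' hQ' hP hQ; linear_combination (-e) * hdet
  have I3 : p * Q' - P' * q = f := by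
    subst hP' hQ'; linear_combination hdet
  have I4 : p * (Q - Q') - (P - P') * q = f := by
    subst hP' hQ' hP hQ; linear_combination hdet
  have I5 : P * q - p * Q = -2 * f := by
    subst hP' hQ' hP hQ; linear_combination (-2) * hdet
  have I6 : P' * (q - q') - (p - p') * Q' = (a - 1) * f := by
    subst hP' hQ'; linear_combination (a - 1) * hdet
  have I7 : (P - P') * (q - q') - (p - p') * (Q - Q') = (a + e - 1) * f := by
    subst hP' hQ' hP hQ; linear_combination (a + e - 1) * hdet
  have I8 : P * (q - q') - (p - p') * Q = (2*a + e - 2) * f := by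
    subst hP' hQ' hP hQ; linear_combination (2*a + e - 2) * hdet
  refine ⟨?_, ?_, ⟨?_, ?_, ?_⟩, ?_, ?_, ?_⟩
  · -- StrictlyBetween
    rcases hef with h | h
    · exact Or.inl ⟨frac_lt hQ'0 hQ0 (by linarith), frac_lt hQ0 hQ''0 (by linarith)⟩
    · exact Or.inr ⟨frac_lt hQ''0 hQ0 (by linarith), frac_lt hQ0 hQ'0 (by linarith)⟩
  · -- not Between
    rcases hf with rfl | rfl
    · have hA : (P':ℝ)/(Q':ℝ) < (p:ℝ)/(q:ℝ) := frac_lt hQ'0 hq0 (by linarith)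
      have hB : ((P - P' : ℤ):ℝ)/((Q - Q' : ℤ):ℝ) < (p:ℝ)/(q:ℝ) :=
        frac_lt hQ''0 hq0 (by linarith)
      rintro (⟨h1, h2⟩ | ⟨h1, h2⟩) <;> linarith
    · have hA : (p:ℝ)/(q:ℝ) < (P':ℝ)/(Q':ℝ) := frac_lt hq0 hQ'0 (by linarith)
      have hB : (p:ℝ)/(q:ℝ) < ((P - P' : ℤ):ℝ)/((Q - Q' : ℤ):ℝ) :=
        frac_lt hq0 hQ''0 (by linarith)
      rintro (⟨h1, h2⟩ | ⟨h1, h2⟩) <;> linarith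
  · exact frac_ne hQ0 hQ'0 I1 hef0
  · exact fun hc => (frac_ne hQ''0 hQ0 I2 hef0) hc.symm
  · exact frac_ne hQ'0 hQ''0 (by linarith : P' * (Q - Q') - (P - P') * Q' = -(e*f))
      (by simpa using hef0)
  · -- InHalfOpen for P/Q
    rcases hf with rfl | rfl
    · exact Or.inr ⟨frac_le hqq'0 hQ0 (by nlinarith), frac_lt hQ0 hq0 (by linarith)⟩
    · exact Or.inl ⟨frac_lt hq0 hQ0 (by linarith), frac_le hQ0 hqq'0 (by nlinarith)⟩
  · -- InHalfOpen for P'/Q'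
    rcases hf with rfl | rfl
    · exact Or.inr ⟨frac_le hqq'0 hQ'0 (by nlinarith), frac_lt hQ'0 hq0 (by linarith)⟩
    · exact Or.inl ⟨frac_lt hq0 hQ'0 (by linarith), frac_le hQ'0 hqq'0 (by nlinarith)⟩
  · -- InHalfOpen for P''/Q''
    rcases hf with rfl | rfl
    · exact Or.inr ⟨frac_le hqq'0 hQ''0 (by nlinarith), frac_lt hQ''0 hq0 (by linarith)⟩
    · exact Or.inl ⟨frac_lt hq0 hQ''0 (by linarith), frac_le hQ''0 hqq'0 (by nlinarith)⟩

/-- Relative position of the OOCF convergents: for `n ≥ 1`, (i) `p_n/q_n` lies strictly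
between `p'_n/q'_n` and `p''_n/q''_n`; (ii) `p_{n-1}/q_{n-1}` does not lie between
`p'_n/q'_n` and `p''_n/q''_n`; (iii) the three pairwise distinct rationals `p_n/q_n`,
`p'_n/q'_n`, `p''_n/q''_n` lie in the half-open interval with endpoints
`p_{n-1}/q_{n-1}` (excluded) and `p''_{n-1}/q''_{n-1}` (included). -/
theorem oocf_relative_position_of_convergents
    (x : ℝ) (hx : x ∈ Set.Ioo (0 : ℝ) 1) (hirr : Irrational x)
    (n : ℕ) (hn : 1 ≤ n) :
    StrictlyBetween ((oocfP x n : ℝ) / (oocfQ x n : ℝ))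
        ((oocfP' x n : ℝ) / (oocfQ' x n : ℝ)) ((oocfP'' x n : ℝ) / (oocfQ'' x n : ℝ)) ∧
      ¬ Between ((oocfP x (n - 1) : ℝ) / (oocfQ x (n - 1) : ℝ))
        ((oocfP' x n : ℝ) / (oocfQ' x n : ℝ)) ((oocfP'' x n : ℝ) / (oocfQ'' x n : ℝ)) ∧
      ((oocfP x n : ℝ) / (oocfQ x n : ℝ) ≠ (oocfP' x n : ℝ) / (oocfQ' x n : ℝ) ∧
        (oocfP x n : ℝ) / (oocfQ x n : ℝ) ≠ (oocfP'' x n : ℝ) / (oocfQ'' x n : ℝ) ∧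
        (oocfP' x n : ℝ) / (oocfQ' x n : ℝ) ≠ (oocfP'' x n : ℝ) / (oocfQ'' x n : ℝ)) ∧
      InHalfOpen ((oocfP x n : ℝ) / (oocfQ x n : ℝ))
        ((oocfP x (n - 1) : ℝ) / (oocfQ x (n - 1) : ℝ))
        ((oocfP'' x (n - 1) : ℝ) / (oocfQ'' x (n - 1) : ℝ)) ∧
      InHalfOpen ((oocfP' x n : ℝ) / (oocfQ' x n : ℝ))
        ((oocfP x (n - 1) : ℝ) / (oocfQ x (n - 1) : ℝ))
        ((oocfP'' x (n - 1) : ℝ) / (oocfQ'' x (n - 1) : ℝ)) ∧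
      InHalfOpen ((oocfP'' x n : ℝ) / (oocfQ'' x n : ℝ))
        ((oocfP x (n - 1) : ℝ) / (oocfQ x (n - 1) : ℝ))
        ((oocfP'' x (n - 1) : ℝ) / (oocfQ'' x (n - 1) : ℝ)) := by

  obtain ⟨m, rfl⟩ : ∃ m, n = m + 1 := ⟨n - 1, by omega⟩
  simp only [Nat.add_sub_cancel]
  obtain ⟨hq', hqq, hf⟩ := oocf_inv hx hirr m
  obtain ⟨hyI, _⟩ := oocf_iter_s15 hx hirr m
  obtain ⟨ha, he, hae⟩ := oocf_AE hyI
  obtain ⟨h1, h2, h3, h4⟩ := oocf_rec x m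
  rw [oocf_pp'' x (m+1), oocf_qq'' x (m+1), oocf_pp'' x m, oocf_qq'' x m]
  exact oocf_key (oocfP' x m) (oocfQ' x m) (oocfP x m) (oocfQ x m)
    (oocfA (oocfT^[m] x)) (oocfE (oocfT^[m] x))
    (oocfP' x m * oocfQ x m - oocfP x m * oocfQ' x m)
    (oocfP' x (m+1)) (oocfQ' x (m+1)) (oocfP x (m+1)) (oocfQ x (m+1))
    hq' hqq hf rfl ha he hae h1 h2 h3 h4
end

section
/- Let x = p/q ∈ (0,1) be rational with gcd(p,q) = 1 and q > 0, and let T be the odd-odd continued fraction map. If p and q are both odd, then there exists an integer N ≥ 1 with T^N(x) = 1. If p + q is odd, then there exists an integer N ≥ 1 with T^N(x) = 0. -/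
private lemma floor_int_div_real (a b : ℤ) (hb : 0 < b) : ⌊(a : ℝ) / (b : ℝ)⌋ = a / b := by
  have hbR : (0 : ℝ) < (b : ℝ) := by exact_mod_cast hb
  have h1 := Int.mul_ediv_add_emod a b
  have h2 := Int.emod_nonneg a (ne_of_gt hb)
  have h3 := Int.emod_lt_of_pos a hb
  rw [Int.floor_eq_iff]
  constructor
  · rw [le_div_iff₀ hbR]
    have : (a / b) * b ≤ a := by linarith
    exact_mod_cast this
  · rw [div_lt_iff₀ hbR]
    have : a < (a / b + 1) * b := by nlinarith
    exact_mod_cast this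

private lemma oocfT_eval (p q k a b : ℤ) (hp : 0 < p) (hpq : p < q)
    (hk : k = q / (q - p)) (ha : a = k * p - (k - 1) * q) (hb : b = k * q - (k + 1) * p) :
    oocfT ((p : ℝ) / (q : ℝ)) = if a < b then (a : ℝ) / (b : ℝ) else (b : ℝ) / (a : ℝ) := by
  have hq : (0 : ℤ) < q := hp.trans hpq
  have hqR : (0 : ℝ) < (q : ℝ) := by exact_mod_cast hq
  have hqne : (q : ℝ) ≠ 0 := ne_of_gt hqR
  have hd : (0 : ℤ) < q - p := by omega
  have hdR : (0 : ℝ) < ((q - p : ℤ) : ℝ) := by exact_mod_cast hd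
  -- basic inequalities for a, b, k
  have h1 := Int.mul_ediv_add_emod q (q - p)
  have h2 := Int.emod_nonneg q (ne_of_gt hd)
  have h3 := Int.emod_lt_of_pos q hd
  have hk1 : 1 ≤ k := by
    rw [hk]
    nlinarith [Int.mul_ediv_add_emod q (q - p), Int.emod_nonneg q (ne_of_gt hd),
      Int.emod_lt_of_pos q hd]
  have e1 : k * (q - p) ≤ q := by rw [hk]; nlinarith
  have e2 : q < (k + 1) * (q - p) := by rw [hk]; nlinarith
  have haA : 0 ≤ a := by rw [ha]; nlinarith
  have hbB : 0 < b := by rw [hb]; nlinarith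
  have hx1 : (p : ℝ) / (q : ℝ) < 1 := by rw [div_lt_one hqR]; exact_mod_cast hpq
  have hxne : (p : ℝ) / (q : ℝ) ≠ 1 := ne_of_lt hx1
  have h1x : 1 - (p : ℝ) / (q : ℝ) = ((q - p : ℤ) : ℝ) / (q : ℝ) := by
    push_cast; field_simp
  have hfloor : ⌊1 / (1 - (p : ℝ) / (q : ℝ))⌋ = k := by
    rw [h1x, one_div_div, floor_int_div_real q (q - p) hd, hk]
  have hkR : (1 : ℝ) ≤ (k : ℝ) := by exact_mod_cast hk1
  have h2k1 : (0 : ℝ) < 2 * (k : ℝ) + 1 := by linarith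
  have keydiff : (b : ℝ) - (a : ℝ)
      = (2 * (k : ℝ) - 1) * (q : ℝ) - (p : ℝ) * (2 * (k : ℝ) + 1) := by
    rw [ha, hb]; push_cast; ring
  have hcond : ((p : ℝ) / (q : ℝ) < (2 * (k : ℝ) - 1) / (2 * (k : ℝ) + 1)) ↔ a < b := by
    rw [div_lt_div_iff₀ hqR h2k1]
    constructor <;> intro h
    · have : (a : ℝ) < (b : ℝ) := by linarith
      exact_mod_cast this
    · have : (a : ℝ) < (b : ℝ) := by exact_mod_cast h
      linarith
  have hnum : (k : ℝ) * ((p : ℝ) / (q : ℝ)) - ((k : ℝ) - 1) = (a : ℝ) / (q : ℝ) := by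
    rw [ha]; push_cast; field_simp; try ring
  have hden : (k : ℝ) - ((k : ℝ) + 1) * ((p : ℝ) / (q : ℝ)) = (b : ℝ) / (q : ℝ) := by
    rw [hb]; push_cast; field_simp; try ring
  rw [oocfT, if_neg hxne, hfloor]
  rcases lt_or_ge a b with hlt | hle
  · rw [if_pos (hcond.mpr hlt), if_pos hlt, hnum, hden, div_div_div_cancel_right₀ hqne]
  · rw [if_neg (by rw [hcond]; omega), if_neg (by omega), hnum, hden,
      div_div_div_cancel_right₀ hqne]

private lemma oocfT_main : ∀ n : ℕ, ∀ p q : ℤ, q.natAbs = n → 0 < p → p < q → IsCoprime p q →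
    (Odd p → Odd q → ∃ N : ℕ, 1 ≤ N ∧ oocfT^[N] ((p : ℝ) / (q : ℝ)) = 1) ∧
      (Odd (p + q) → ∃ N : ℕ, 1 ≤ N ∧ oocfT^[N] ((p : ℝ) / (q : ℝ)) = 0) := by
  intro n
  induction n using Nat.strong_induction_on with
  | _ n IH =>
  intro p q hn hp hpq hcop
  set k : ℤ := q / (q - p) with hk
  set a : ℤ := k * p - (k - 1) * q with ha
  set b : ℤ := k * q - (k + 1) * p with hb
  have hq : (0 : ℤ) < q := hp.trans hpq
  have hd : (0 : ℤ) < q - p := by omega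
  have h1 := Int.mul_ediv_add_emod q (q - p)
  have h2 := Int.emod_nonneg q (ne_of_gt hd)
  have h3 := Int.emod_lt_of_pos q hd
  have haA : 0 ≤ a := by rw [ha, hk]; nlinarith
  have hbB : 0 < b := by rw [hb, hk]; nlinarith
  have hab : a + b = q - p := by rw [ha, hb]; ring
  have hcop' : IsCoprime a b := by
    obtain ⟨u, v, huv⟩ := hcop
    exact ⟨u * k + v * (k + 1), u * (k - 1) + v * k, by rw [ha, hb]; linear_combination huv⟩
  have hval := oocfT_eval p q k a b hp hpq hk ha hb
  have hoddab : Odd p → Odd q → Odd a ∧ Odd b := by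
    rintro ⟨m, hm⟩ ⟨l, hl⟩
    constructor
    · exact ⟨k * m - (k - 1) * l, by rw [ha, hm, hl]; ring⟩
    · exact ⟨k * l - (k + 1) * m - 1, by rw [hb, hm, hl]; ring⟩
  have hoddsum : Odd (p + q) → Odd (a + b) := by
    rintro ⟨m, hm⟩; exact ⟨m - p, by omega⟩
  rcases lt_trichotomy a b with hlt | heq | hgt
  · -- branch a < b
    have hval1 : oocfT ((p : ℝ) / (q : ℝ)) = (a : ℝ) / (b : ℝ) := by rw [hval, if_pos hlt]
    rcases eq_or_lt_of_le haA with hA0 | hApos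
    · -- a = 0, so T x = 0
      have hT0 : oocfT ((p : ℝ) / (q : ℝ)) = 0 := by rw [hval1, ← hA0]; simp
      constructor
      · intro hop hoq
        obtain ⟨m, hm⟩ := (hoddab hop hoq).1
        omega
      · intro _
        exact ⟨1, le_refl 1, by simpa using hT0⟩
    · -- 0 < a < b : recurse with (a, b)
      have hrec := IH b.natAbs (by omega) a b rfl hApos hlt hcop'
      constructor
      · intro hop hoq
        obtain ⟨ho1, ho2⟩ := hoddab hop hoq
        obtain ⟨N, hN1, hN2⟩ := hrec.1 ho1 ho2
        exact ⟨N + 1, by omega, by rw [Function.iterate_succ_apply, hval1]; exact hN2⟩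
      · intro hsum
        obtain ⟨N, hN1, hN2⟩ := hrec.2 (hoddsum hsum)
        exact ⟨N + 1, by omega, by rw [Function.iterate_succ_apply, hval1]; exact hN2⟩
  · -- a = b : coprime forces a = b = 1, T x = 1
    have hunit : IsUnit a := isCoprime_self.1 (heq ▸ hcop')
    have ha1 : a = 1 := by rcases Int.isUnit_iff.1 hunit with h | h <;> omega
    have hT1 : oocfT ((p : ℝ) / (q : ℝ)) = 1 := by
      have hb1 : b = 1 := by omega
      rw [hval, if_neg (by omega), ha1, hb1]; norm_num
    constructor
    · intro _ _
      exact ⟨1, le_refl 1, by simpa using hT1⟩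
    · intro hsum
      obtain ⟨m, hm⟩ := hoddsum hsum
      omega
  · -- branch b < a : recurse with (b, a)
    have hval2 : oocfT ((p : ℝ) / (q : ℝ)) = (b : ℝ) / (a : ℝ) := by
      rw [hval, if_neg (by omega)]
    have hrec := IH a.natAbs (by omega) b a rfl hbB hgt hcop'.symm
    constructor
    · intro hop hoq
      obtain ⟨ho1, ho2⟩ := hoddab hop hoq
      obtain ⟨N, hN1, hN2⟩ := hrec.1 ho2 ho1
      exact ⟨N + 1, by omega, by rw [Function.iterate_succ_apply, hval2]; exact hN2⟩
    · intro hsum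
      obtain ⟨m, hm⟩ := hoddsum hsum
      obtain ⟨N, hN1, hN2⟩ := hrec.2 ⟨m, by omega⟩
      exact ⟨N + 1, by omega, by rw [Function.iterate_succ_apply, hval2]; exact hN2⟩

/-- For a rational `p/q ∈ (0,1)` in lowest terms: if `p` and `q` are both odd then some
iterate of the odd-odd continued fraction map sends `p/q` to `1`; if `p + q` is odd then
some iterate sends `p/q` to `0`. -/
theorem oocfT_rational_orbit
    (p q : ℤ) (hq : 0 < q) (hcop : IsCoprime p q)
    (hx : (p : ℝ) / (q : ℝ) ∈ Set.Ioo (0 : ℝ) 1) :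
    (Odd p → Odd q → ∃ N : ℕ, 1 ≤ N ∧ oocfT^[N] ((p : ℝ) / (q : ℝ)) = 1) ∧
      (Odd (p + q) → ∃ N : ℕ, 1 ≤ N ∧ oocfT^[N] ((p : ℝ) / (q : ℝ)) = 0) := by
  have hqR : (0 : ℝ) < (q : ℝ) := by exact_mod_cast hq
  have hp : 0 < p := by
    have h := mul_pos hx.1 hqR
    rw [div_mul_cancel₀ _ (ne_of_gt hqR)] at h
    exact_mod_cast h
  have hpq : p < q := by
    have h := hx.2
    rw [div_lt_one hqR] at h
    exact_mod_cast h
  exact oocfT_main q.natAbs p q rfl hp hpq hcop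
end
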